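/- Let A = a ∈ ℂ with 0 < |a| < 1, a ≠ 0, B = 1, and let v = (1/(1-a), 1)ᵀ ∈ ℂ². Then V = v v* satisfies [a 1] V [a 1]* = [1 0] V [1 0]* and V ⪰ 0, but there is no l₂ signal w with x₀ = 0, x_{k+1} = a x_k + w_k such that ∑_k [x_k; w_k][x_k; w_k]* = V. -/

import Mathlib

open Matrix
open scoped ComplexOrder

/-- Outer product `v v*` of a vector. -/
noncomputable def outer {ι : Type*} [Fintype ι] (v : ι → ℂ) : Matrix ι ι ℂ :=
  Matrix.of fun i j => v i * star (v j)

/-- For the scalar system `x_{k+1} = a x_k + w_k` with `0 < |a| < 1`, the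
rank-one matrix `V = v v*` with `v = (1/(1-a), 1)` lies in the cone `𝒞` but is not a
gramian of any `l₂` disturbance: `𝒮 ⊊ 𝒞`. -/
theorem cone_mem_not_gramian (a : ℂ) (ha0 : a ≠ 0) (ha : ‖a‖ < 1)
    (V : Matrix (Fin 2) (Fin 2) ℂ) (hV : V = outer ![1 / (1 - a), 1]) :
    (!![a, 1] * V * (!![a, 1])ᴴ = !![(1 : ℂ), 0] * V * (!![(1 : ℂ), 0])ᴴ ∧
        V.PosSemidef) ∧
      ¬ ∃ (w : ℕ → ℂ) (x : ℕ → ℂ),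
          Summable (fun k => ‖w k‖ ^ 2) ∧ x 0 = 0 ∧
          (∀ k, x (k + 1) = a * x k + w k) ∧
          (∑' k, outer ![x k, w k]) = V := by
  have h1a : (1 : ℂ) - a ≠ 0 := by
    intro h
    have : a = 1 := by linear_combination -h
    rw [this] at ha; simp at ha
  obtain ⟨c, hc⟩ : ∃ c : ℂ, c = 1 / (1 - a) := ⟨_, rfl⟩
  have hcne : c ≠ 0 := hc ▸ one_div_ne_zero h1a
  constructor
  · constructor
    · subst hV
      ext i j
      fin_cases i; fin_cases j
      simp only [Matrix.mul_apply, outer, Fin.sum_univ_two, conjTranspose_apply,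
        Matrix.of_apply, Matrix.cons_val_zero, Matrix.cons_val_one, Matrix.head_cons,
        Matrix.cons_val', Matrix.empty_val', Matrix.cons_val_fin_one, star_one]
      have h2' : (1 : ℂ) - (starRingEnd ℂ) a ≠ 0 := by
        intro h
        have h3 : (starRingEnd ℂ) a = 1 := by linear_combination -h
        have := congrArg (starRingEnd ℂ) h3
        simp at this
        rw [this] at ha; simp at ha
      field_simp
      simp only [star_zero]
      have key : (1:ℂ) + (1 - a)⁻¹ * a = (1 - a)⁻¹ := by field_simp; ring
      have := congrArg star key
      simpa [star_mul', add_comm] using this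
    · subst hV
      have : outer ![1 / (1 - a), 1]
          = (Matrix.replicateCol (Fin 1) ![1 / (1 - a), 1]) * (Matrix.replicateCol (Fin 1) ![1 / (1 - a), 1])ᴴ := by
        ext i j
        simp [Matrix.mul_apply, outer, Matrix.replicateCol]
      rw [this]
      exact Matrix.posSemidef_self_mul_conjTranspose _
  · rintro ⟨w, x, hw2, hx0, hrec, hsum⟩
    -- V entries
    have hV00 : V 0 0 = c * star c := by rw [hV, hc]; simp [outer]
    have hV01 : V 0 1 = c := by rw [hV, hc]; simp [outer]
    have hV10 : V 1 0 = star c := by rw [hV, hc]; simp [outer]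
    have hV11 : V 1 1 = 1 := by rw [hV]; simp [outer]
    by_cases hS : Summable (fun k => outer ![x k, w k])
    · have hHS : HasSum (fun k => outer ![x k, w k]) V := hsum ▸ hS.hasSum
      have hentry : ∀ i j, HasSum (fun k => (outer ![x k, w k]) i j) (V i j) := by
        intro i j
        exact Pi.hasSum.mp (Pi.hasSum.mp hHS i) j
      have h00 : HasSum (fun k => x k * star (x k)) (c * star c) := by
        have := hentry 0 0; rw [hV00] at this
        simpa [outer] using this
      have h01 : HasSum (fun k => x k * star (w k)) c := by
        have := hentry 0 1; rw [hV01] at this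
        simpa [outer] using this
      have h10 : HasSum (fun k => w k * star (x k)) (star c) := by
        have := hentry 1 0; rw [hV10] at this
        simpa [outer] using this
      have h11 : HasSum (fun k => w k * star (w k)) 1 := by
        have := hentry 1 1; rw [hV11] at this
        simpa [outer] using this
      -- the defect sum
      have hd : HasSum
          (fun k => (x k - c * w k) * star (x k - c * w k)) 0 := by
        have h := ((h00.sub (h01.mul_left (star c))).sub (h10.mul_left c)).add
          (h11.mul_left (c * star c))
        have hf : (fun k => (x k * star (x k) - star c * (x k * star (w k)) -
              c * (w k * star (x k))) + c * star c * (w k * star (w k)))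
            = fun k => (x k - c * w k) * star (x k - c * w k) := by
          funext k
          rw [star_sub, star_mul']
          ring
        have hv : (c * star c - star c * c - c * star c) + c * star c * 1 = 0 := by ring
        rwa [hf, hv] at h
      have hdre : HasSum (fun k => Complex.normSq (x k - c * w k)) 0 := by
        have h := Complex.hasSum_re hd
        simp only [Complex.zero_re] at h
        have he : (fun k => ((x k - c * w k) * star (x k - c * w k)).re)
            = fun k => Complex.normSq (x k - c * w k) := by
          funext k
          simp [Complex.normSq_apply, Complex.sub_re, Complex.sub_im, Complex.mul_re,
            Complex.mul_im]
          ring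
        rwa [he] at h
      have hxw : ∀ k, x k = c * w k := by
        intro k
        have hle := le_hasSum hdre k (fun j _ => Complex.normSq_nonneg _)
        have := le_antisymm hle (Complex.normSq_nonneg _)
        have := Complex.normSq_eq_zero.mp this
        linear_combination this
      have hx : ∀ k, x k = 0 := by
        intro k
        induction k with
        | zero => exact hx0
        | succ n ih =>
            have hwn : w n = c⁻¹ * x n := by
              rw [hxw n, inv_mul_cancel_left₀ hcne]
            rw [hrec n, ih, hwn, ih]; ring
      have hw0 : ∀ k, w k = 0 := by
        intro k
        have := hxw k
        rw [hx k] at this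
        exact (mul_eq_zero.mp this.symm).resolve_left hcne
      have h0 : HasSum (fun _ : ℕ => (0 : ℂ)) (1 : ℂ) := by
        have he : (fun k => w k * star (w k)) = fun _ : ℕ => (0 : ℂ) := by
          funext k; rw [hw0 k]; ring
        rwa [he] at h11
      exact one_ne_zero (h0.unique hasSum_zero)
    · have : (∑' k, outer ![x k, w k]) = 0 := tsum_eq_zero_of_not_summable hS
      rw [hsum] at this
      have := congrFun (congrFun this 1) 1
      rw [hV11] at this
      simp at this
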